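/- arXiv:2012.04806 — 5 statements merged into one kernel-verified Lean document; each statement's English description precedes it below -/
import Mathlib

section
/- Let G be a finite group, H ≤ G a subgroup, g ∈ G, and let T ⊆ G be the conjugacy class of g. Then the number of fixed points of g acting on the coset space G/H (by left translation) equals |G| · |T ∩ H| / (|H| · |T|). -/
/-- Fixed points of g on G/H number |G|·|T∩H|/(|H|·|T|), where T is the conjugacy class of g. -/
theorem stmt_1 (G : Type) [Group G] [Fintype G] (H : Subgroup G) (g : G)
    (T : Set G) (hT : T = {x : G | ∃ y : G, y * g * y⁻¹ = x}) :
    Nat.card (MulAction.fixedBy (G ⧸ H) g) * (Nat.card H * Nat.card T) =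
      Nat.card G * Nat.card (T ∩ (H : Set G) : Set G) := by
  classical
  set F : Set (G ⧸ H) := MulAction.fixedBy (G ⧸ H) g with hF
  set f : G → G := fun x => x⁻¹ * g * x with hf
  -- Step A: preimage of F is S = {x | f x ∈ H}
  have hpre : (QuotientGroup.mk ⁻¹' F : Set G) = {x : G | f x ∈ H} := by
    ext x
    simp only [Set.mem_preimage, hF, MulAction.mem_fixedBy, Set.mem_setOf_eq, hf]
    rw [show g • (QuotientGroup.mk x : G ⧸ H) = QuotientGroup.mk (g * x) from rfl,
      QuotientGroup.eq]
    constructor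
    · intro h; have := H.inv_mem h; simpa [mul_assoc] using this
    · intro h; have := H.inv_mem h; simpa [mul_assoc] using this
  have hcardA : Nat.card H * Nat.card F = Nat.card {x : G | f x ∈ H} := by
    rw [← hpre, Nat.card_congr (QuotientGroup.preimageMkEquivSubgroupProdSet H F),
      Nat.card_prod]
  -- fibers of f
  have hfT : ∀ x : G, f x ∈ T := by
    intro x; rw [hT]; exact ⟨x⁻¹, by simp [hf]⟩
  set c := (Finset.univ.filter fun x : G => f x = g).card with hc
  have hfiber : ∀ t ∈ T, (Finset.univ.filter fun x : G => f x = t).card = c := by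
    intro t ht
    rw [hT] at ht
    obtain ⟨y, hy⟩ := ht
    rw [hc]
    apply Finset.card_bij' (fun x _ => x * y) (fun x _ => x * y⁻¹)
    · intro x hx
      simp only [Finset.mem_filter, Finset.mem_univ, true_and, hf] at hx ⊢
      rw [show (x * y)⁻¹ * g * (x * y) = y⁻¹ * (x⁻¹ * g * x) * y by group, hx, ← hy]
      group
    · intro x hx
      simp only [Finset.mem_filter, Finset.mem_univ, true_and, hf] at hx ⊢
      rw [show (x * y⁻¹)⁻¹ * g * (x * y⁻¹) = y * (x⁻¹ * g * x) * y⁻¹ by group, hx]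
      exact hy
    · intro x _; group
    · intro x _; group
  -- |G| = |T| * c
  have hG : Fintype.card G = T.toFinset.card * c := by
    rw [← Finset.card_univ,
      Finset.card_eq_sum_card_fiberwise
        (fun x _ => by simpa using hfT x : ∀ x ∈ Finset.univ, f x ∈ T.toFinset)]
    rw [Finset.sum_congr rfl fun t ht => hfiber t (by simpa using ht)]
    simp [mul_comm]
  -- |S| = |T ∩ H| * c
  have hS : (Finset.univ.filter fun x : G => f x ∈ (H : Set G)).card
      = (T ∩ (H : Set G)).toFinset.card * c := by
    have key : ∀ t ∈ (T ∩ (H : Set G)).toFinset,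
        ((Finset.univ.filter fun x : G => f x ∈ (H : Set G)).filter
          fun a => f a = t).card = c := by
      intro t ht
      simp only [Set.mem_toFinset, Set.mem_inter_iff, SetLike.mem_coe] at ht
      rw [Finset.filter_filter, ← hfiber t ht.1]
      congr 1
      ext x
      simp only [Finset.mem_filter, Finset.mem_univ, true_and, SetLike.mem_coe]
      constructor
      · rintro ⟨_, h⟩; exact h
      · intro h; exact ⟨by rw [h]; exact ht.2, h⟩
    rw [Finset.card_eq_sum_card_fiberwise
        (fun x hx => by
          simp only [Finset.mem_filter, Finset.mem_univ, true_and] at hx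
          simp only [Set.mem_toFinset, Set.mem_inter_iff, SetLike.mem_coe]
          exact ⟨hfT x, hx⟩ :
        ∀ x ∈ Finset.univ.filter fun x : G => f x ∈ (H : Set G),
          f x ∈ (T ∩ (H : Set G)).toFinset),
      Finset.sum_congr rfl key, Finset.sum_const, smul_eq_mul]
  -- convert Nat.cards
  have e1 : Nat.card {x : G | f x ∈ H}
      = (Finset.univ.filter fun x : G => f x ∈ (H : Set G)).card := by
    rw [Nat.card_eq_card_toFinset]
    congr 1
    ext x
    simp
  have e2 : Nat.card T = T.toFinset.card := Nat.card_eq_card_toFinset T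
  have e3 : Nat.card (T ∩ (H : Set G) : Set G) = (T ∩ (H : Set G)).toFinset.card :=
    Nat.card_eq_card_toFinset _
  calc Nat.card F * (Nat.card H * Nat.card T)
      = (Nat.card H * Nat.card F) * Nat.card T := by ring
    _ = (T ∩ (H : Set G)).toFinset.card * c * T.toFinset.card := by
        rw [hcardA, e1, hS, e2]
    _ = (T.toFinset.card * c) * (T ∩ (H : Set G)).toFinset.card := by ring
    _ = Nat.card G * Nat.card (T ∩ (H : Set G) : Set G) := by
        rw [← hG, e3, Nat.card_eq_fintype_card]
end

section
/- Let G be a finite cyclic group and let A, B be finite G-sets such that every g ∈ G has the same number of fixed points on A as on B. Then A and B are isomorphic as G-sets, i.e., there is a G-equivariant bijection A → B. -/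
open Equiv Equiv.Perm

private lemma mkey : ∀ n (M N : Multiset ℕ), M.card + N.card = n →
    (∀ d ∈ M, 0 < d) → (∀ d ∈ N, 0 < d) →
    (∀ k : ℕ, 0 < k → (M.filter (· ∣ k)).sum = (N.filter (· ∣ k)).sum) → M = N := by
  intro n
  induction n using Nat.strong_induction_on with
  | _ n ih =>
    intro M N hcard hM hN h
    by_cases h0 : M + N = 0
    · have := congrArg Multiset.card h0
      simp only [Multiset.card_add, Multiset.card_zero, Nat.add_eq_zero,
        Multiset.card_eq_zero] at this
      rw [this.1, this.2]
    · have hne : (M + N).toFinset.Nonempty := by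
        rw [Multiset.toFinset_nonempty]; exact h0
      set m := (M + N).toFinset.min' hne with hm
      have hmmem : m ∈ M + N := by
        have := (M + N).toFinset.min'_mem hne
        rwa [Multiset.mem_toFinset] at this
      have hmin : ∀ d ∈ M + N, m ≤ d := fun d hd =>
        (M + N).toFinset.min'_le d (Multiset.mem_toFinset.mpr hd)
      have hmpos : 0 < m := by
        rcases Multiset.mem_add.mp hmmem with hd | hd
        · exact hM m hd
        · exact hN m hd
      have hfM : M.filter (· ∣ m) = M.filter (· = m) := by
        apply Multiset.filter_congr
        intro d hd
        constructor
        · intro hdvd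
          exact le_antisymm (Nat.le_of_dvd hmpos hdvd) (hmin d (Multiset.mem_add.mpr (Or.inl hd)))
        · rintro rfl; exact dvd_rfl
      have hfN : N.filter (· ∣ m) = N.filter (· = m) := by
        apply Multiset.filter_congr
        intro d hd
        constructor
        · intro hdvd
          exact le_antisymm (Nat.le_of_dvd hmpos hdvd) (hmin d (Multiset.mem_add.mpr (Or.inr hd)))
        · rintro rfl; exact dvd_rfl
      have hcount : M.count m = N.count m := by
        have := h m hmpos
        rw [hfM, hfN, Multiset.filter_eq', Multiset.filter_eq',
          Multiset.sum_replicate, Multiset.sum_replicate] at this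
        exact Nat.eq_of_mul_eq_mul_right hmpos this
      have hmM : m ∈ M := by
        rcases Multiset.mem_add.mp hmmem with hd | hd
        · exact hd
        · rw [← Multiset.count_pos, hcount, Multiset.count_pos]; exact hd
      have hmN : m ∈ N := by
        rw [← Multiset.count_pos, ← hcount, Multiset.count_pos]; exact hmM
      have hMc : m ::ₘ M.erase m = M := Multiset.cons_erase hmM
      have hNc : m ::ₘ N.erase m = N := Multiset.cons_erase hmN
      have hrec : M.erase m = N.erase m := by
        apply ih ((M.erase m).card + (N.erase m).card) _ _ _ rfl
        · intro d hd; exact hM d (Multiset.mem_of_mem_erase hd)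
        · intro d hd; exact hN d (Multiset.mem_of_mem_erase hd)
        · intro k hk
          have := h k hk
          rw [← hMc, ← hNc, Multiset.filter_cons, Multiset.filter_cons] at this
          by_cases hdvd : m ∣ k
          · simp only [hdvd, if_pos] at this
            simpa using this
          · simpa [hdvd] using this
        · have hc1 : 0 < M.card := Multiset.card_pos.mpr (fun hh => by simp [hh] at hmM)
          have hc2 : 0 < N.card := Multiset.card_pos.mpr (fun hh => by simp [hh] at hmN)
          rw [Multiset.card_erase_of_mem hmM, Multiset.card_erase_of_mem hmN]
          simp only [Nat.pred_eq_sub_one]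
          omega
      rw [← hMc, ← hNc, hrec]

private lemma supp_pow {α : Type} [Fintype α] [DecidableEq α] (σ : Perm α) (k : ℕ) :
    (σ ^ k).support.card = (σ.cycleType.filter (fun d => ¬ d ∣ k)).sum := by
  induction σ using cycle_induction_on with
  | base_one => simp
  | base_cycles c hc =>
    rw [hc.cycleType]
    by_cases hd : c.support.card ∣ k
    · have h1 : c ^ k = 1 := by
        rw [← hc.orderOf] at hd
        exact orderOf_dvd_iff_pow_eq_one.mp hd
      simp [h1, hd, Multiset.filter_singleton]
    · have h1 : (c ^ k).support = c.support := by
        apply hc.support_pow_eq_iff.2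
        rwa [hc.orderOf]
      simp [h1, hd, Multiset.filter_singleton]
  | induction_disjoint σ τ hdis hcyc hσ hτ =>
    have hdk : Disjoint (σ ^ k) (τ ^ k) := hdis.pow_disjoint_pow k k
    rw [hdis.commute.mul_pow, hdk.card_support_mul, Equiv.Perm.Disjoint.cycleType_mul hdis,
      Multiset.filter_add, Multiset.sum_add, hσ, hτ]

private lemma fix_card {α : Type} [Fintype α] [DecidableEq α] (σ : Perm α) (k : ℕ) :
    Nat.card {x : α // (σ ^ k) x = x} =
      Fintype.card α - (σ.cycleType.filter (fun d => ¬ d ∣ k)).sum := by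
  rw [← supp_pow]
  have hset : {x : α | (σ ^ k) x = x} = ↑((σ ^ k).supportᶜ) := by
    ext x
    simp [Equiv.Perm.notMem_support]
  calc Nat.card {x : α // (σ ^ k) x = x} = ({x : α | (σ ^ k) x = x}).ncard :=
        Nat.card_coe_set_eq _
    _ = ((((σ ^ k).supportᶜ : Finset α)) : Set α).ncard := by rw [hset]
    _ = ((σ ^ k).supportᶜ).card := Set.ncard_coe_finset _
    _ = Fintype.card α - (σ ^ k).support.card := by rw [Finset.card_compl]

private lemma msum_le {s t : Multiset ℕ} (h : s ≤ t) : s.sum ≤ t.sum := by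
  obtain ⟨u, rfl⟩ := Multiset.le_iff_exists_add.mp h
  simp

/-- Gassmann equivalent finite G-sets over a finite cyclic group are isomorphic. -/
theorem stmt_5 (G : Type) [Group G] [Fintype G] [IsCyclic G]
    (A B : Type) [Fintype A] [Fintype B] [MulAction G A] [MulAction G B]
    (h : ∀ g : G, Nat.card (MulAction.fixedBy A g) = Nat.card (MulAction.fixedBy B g)) :
    ∃ e : A ≃ B, ∀ (g : G) (a : A), e (g • a) = g • e a := by
  classical
  obtain ⟨g0, hg0⟩ := IsCyclic.exists_generator (α := G)
  set σA : Perm A := MulAction.toPermHom G A g0 with hσA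
  set σB : Perm B := MulAction.toPermHom G B g0 with hσB
  have hfixA : ∀ g : G, {x : A | (MulAction.toPermHom G A g) x = x} = MulAction.fixedBy A g :=
    fun g => rfl
  have hfixB : ∀ g : G, {y : B | (MulAction.toPermHom G B g) y = y} = MulAction.fixedBy B g :=
    fun g => rfl
  -- cardinalities agree
  have hcardAB : Fintype.card A = Fintype.card B := by
    have h1 := h 1
    have hA : MulAction.fixedBy A (1 : G) = Set.univ := by ext x; simp [MulAction.fixedBy]
    have hB : MulAction.fixedBy B (1 : G) = Set.univ := by ext x; simp [MulAction.fixedBy]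
    rw [hA, hB, Nat.card_congr (Equiv.Set.univ A), Nat.card_congr (Equiv.Set.univ B)] at h1
    simpa [Nat.card_eq_fintype_card] using h1
  set e0 : A ≃ B := Fintype.equivOfCardEq hcardAB with he0
  set τ : Perm A := (Equiv.permCongr e0.symm) σB with hτ
  have hpow : ∀ k : ℕ, τ ^ k = (Equiv.permCongr e0.symm) (σB ^ k) := by
    intro k
    induction k with
    | zero => ext x; simp
    | succ n ihn =>
      rw [pow_succ, pow_succ, ihn]
      ext x
      simp [hτ, Equiv.permCongr_apply, Equiv.Perm.mul_apply]
  -- fixed point counts of τ powers equal those of σB powers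
  have hτfix : ∀ k : ℕ, Nat.card {x : A // (τ ^ k) x = x} = Nat.card {y : B // (σB ^ k) y = y} := by
    intro k
    refine Nat.card_congr (Equiv.subtypeEquiv e0 fun x => ?_)
    rw [hpow]
    simp [Equiv.permCongr_apply, Equiv.symm_apply_eq]
  -- equality of fixed point counts of σA^k and τ^k
  have hfixk : ∀ k : ℕ, Nat.card {x : A // (σA ^ k) x = x} = Nat.card {x : A // (τ ^ k) x = x} := by
    intro k
    rw [hτfix k]
    have hpA : σA ^ k = MulAction.toPermHom G A (g0 ^ k) := by rw [hσA, map_pow]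
    have hpB : σB ^ k = MulAction.toPermHom G B (g0 ^ k) := by rw [hσB, map_pow]
    rw [hpA, hpB]
    exact h (g0 ^ k)
  -- equal not-dividing filter sums
  have hk : ∀ k : ℕ, (σA.cycleType.filter (fun d => ¬ d ∣ k)).sum
      = (τ.cycleType.filter (fun d => ¬ d ∣ k)).sum := by
    intro k
    have h1 := fix_card σA k
    have h2 := fix_card τ k
    have hb1 : (σA.cycleType.filter (fun d => ¬ d ∣ k)).sum ≤ Fintype.card A := by
      refine le_trans (msum_le (Multiset.filter_le _ _)) ?_
      rw [Equiv.Perm.sum_cycleType]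
      exact Finset.card_le_univ _
    have hb2 : (τ.cycleType.filter (fun d => ¬ d ∣ k)).sum ≤ Fintype.card A := by
      refine le_trans (msum_le (Multiset.filter_le _ _)) ?_
      rw [Equiv.Perm.sum_cycleType]
      exact Finset.card_le_univ _
    have := hfixk k
    omega
  -- cycle types are equal
  have hct : σA.cycleType = τ.cycleType := by
    have htotal : σA.cycleType.sum = τ.cycleType.sum := by
      have h1 : σA.cycleType.filter (fun d => ¬ d ∣ 1) = σA.cycleType :=
        Multiset.filter_eq_self.mpr fun d hd => by
          have := Equiv.Perm.two_le_of_mem_cycleType hd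
          simp only [Nat.dvd_one]
          omega
      have h2 : τ.cycleType.filter (fun d => ¬ d ∣ 1) = τ.cycleType :=
        Multiset.filter_eq_self.mpr fun d hd => by
          have := Equiv.Perm.two_le_of_mem_cycleType hd
          simp only [Nat.dvd_one]
          omega
      have := hk 1
      rwa [h1, h2] at this
    refine mkey (σA.cycleType.card + τ.cycleType.card) _ _ rfl
      (fun d hd => by have := Equiv.Perm.two_le_of_mem_cycleType hd; omega)
      (fun d hd => by have := Equiv.Perm.two_le_of_mem_cycleType hd; omega) ?_
    intro k hkpos
    have hs1 := congrArg Multiset.sum (Multiset.filter_add_not (· ∣ k) σA.cycleType)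
    have hs2 := congrArg Multiset.sum (Multiset.filter_add_not (· ∣ k) τ.cycleType)
    rw [Multiset.sum_add] at hs1 hs2
    have := hk k
    omega
  obtain ⟨π, hπ⟩ := isConj_iff.mp (Equiv.Perm.isConj_of_cycleType_eq hct)
  have hπ' : π * σA = τ * π := by
    rw [← hπ]
    group
  have hsemi : ∀ a : A, π (σA a) = τ (π a) := by
    intro a
    have := congrArg (fun f : Perm A => f a) hπ'
    simpa [Equiv.Perm.mul_apply] using this
  refine ⟨Equiv.trans (π : Equiv A A) e0, ?_⟩
  have hgen : ∀ a : A, (Equiv.trans (π : Equiv A A) e0) (g0 • a)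
      = g0 • (Equiv.trans (π : Equiv A A) e0) a := by
    intro a
    have h1 : π (g0 • a) = τ (π a) := hsemi a
    simp only [Equiv.trans_apply]
    rw [h1, hτ]
    simp only [Equiv.permCongr_apply, Equiv.symm_symm, Equiv.apply_symm_apply]
    rfl
  set e := Equiv.trans (π : Equiv A A) e0
  let H : Subgroup G :=
    { carrier := {g : G | ∀ a : A, e (g • a) = g • e a}
      one_mem' := by intro a; simp
      mul_mem' := by
        intro g g' hg hg' a
        rw [mul_smul, hg, hg', mul_smul]
      inv_mem' := by
        intro g hg a
        have := hg (g⁻¹ • a)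
        rw [smul_inv_smul] at this
        rw [this, inv_smul_smul] }
  intro g a
  have hmem : g ∈ H := by
    have hsub : Subgroup.zpowers g0 ≤ H := (Subgroup.zpowers_le).mpr hgen
    exact hsub (hg0 g)
  exact hmem a
end

section
/- Let G be a finite group, H a normal subgroup of G and H' an arbitrary subgroup of G. If for every g ∈ G the number of fixed points of g on G/H equals the number of fixed points of g on G/H', then H' = H. In particular the G-sets G/H and G/H' are isomorphic. -/
/-- If H is normal and G/H, G/H' are Gassmann equivalent, then H' = H
(and in particular G/H and G/H' are isomorphic G-sets). -/
theorem stmt_6 (G : Type) [Group G] [Fintype G] (H H' : Subgroup G) [H.Normal]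
    (h : ∀ g : G,
      Nat.card (MulAction.fixedBy (G ⧸ H) g) = Nat.card (MulAction.fixedBy (G ⧸ H') g)) :
    H' = H ∧ ∃ e : (G ⧸ H) ≃ (G ⧸ H'), ∀ (g : G) (x : G ⧸ H), e (g • x) = g • e x := by
  have hle : H' ≤ H := by
    intro g hg
    have h1 : ((1 : G) : G ⧸ H') ∈ MulAction.fixedBy (G ⧸ H') g := by
      show g • ((1 : G) : G ⧸ H') = ((1 : G) : G ⧸ H')
      have : g • ((1 : G) : G ⧸ H') = ((g * 1 : G) : G ⧸ H') := rfl
      rw [this, mul_one]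
      exact (QuotientGroup.eq).2 (by simpa using hg)
    have hpos : 0 < Nat.card (MulAction.fixedBy (G ⧸ H') g) := by
      have : Nonempty (MulAction.fixedBy (G ⧸ H') g) := ⟨⟨_, h1⟩⟩
      exact Nat.card_pos
    rw [← h g] at hpos
    have hne : Nonempty (MulAction.fixedBy (G ⧸ H) g) := by
      rcases Nat.card_pos_iff.mp hpos with ⟨hne, _⟩
      exact hne
    obtain ⟨⟨x, hx⟩⟩ := hne
    obtain ⟨a, rfl⟩ := QuotientGroup.mk_surjective x
    have hx' : ((g * a : G) : G ⧸ H) = (a : G ⧸ H) := by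
      exact hx
    have hmem : (g * a)⁻¹ * a ∈ H := (QuotientGroup.eq).1 hx'
    have hmem' : a⁻¹ * g⁻¹ * a ∈ H := by simpa [mul_inv_rev, mul_assoc] using hmem
    have : a * (a⁻¹ * g⁻¹ * a) * a⁻¹ ∈ H :=
      ‹H.Normal›.conj_mem _ hmem' a
    have hginv : g⁻¹ ∈ H := by
      simpa [mul_assoc] using this
    simpa using H.inv_mem hginv
  have hidx : H.index = H'.index := by
    have h1 := h 1
    rw [MulAction.fixedBy_one_eq_univ, MulAction.fixedBy_one_eq_univ] at h1
    have e1 : Nat.card (Set.univ : Set (G ⧸ H)) = Nat.card (G ⧸ H) :=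
      Nat.card_congr (Equiv.Set.univ _)
    have e2 : Nat.card (Set.univ : Set (G ⧸ H')) = Nat.card (G ⧸ H') :=
      Nat.card_congr (Equiv.Set.univ _)
    simpa [Subgroup.index, e1, e2] using h1
  have hcard : Nat.card H ≤ Nat.card H' := by
    have c1 := Subgroup.card_mul_index H
    have c2 := Subgroup.card_mul_index H'
    have hidx_pos : 0 < H.index := Nat.pos_of_ne_zero (Subgroup.index_ne_zero_of_finite)
    have : Nat.card H * H.index = Nat.card H' * H.index := by
      rw [c1, hidx, c2]
    exact le_of_eq (Nat.eq_of_mul_eq_mul_right hidx_pos this)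
  have heq : H' = H := Subgroup.eq_of_le_of_card_ge hle hcard
  subst heq
  exact ⟨rfl, Equiv.refl _, fun g x => rfl⟩
end

section
/- Let G be a finite group and let A, B be finite G-sets of cardinality at most 5 such that for every g ∈ G the number of fixed points of g on A equals the number of fixed points of g on B. Then A and B are isomorphic as G-sets. -/
open MulAction

section Prelim
variable {G : Type*} [Group G] {X : Type*} [MulAction G X]

/-- fix count as Nat.card -/
noncomputable def fx (G : Type*) [Group G] (X : Type*) [MulAction G X] (g : G) : ℕ :=
  Nat.card (fixedBy X g)

lemma fx_one (G : Type*) [Group G] (X : Type*) [MulAction G X] :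
    fx G X 1 = Nat.card X := by
  unfold fx
  have : fixedBy X (1:G) = Set.univ := by
    ext x; simp [fixedBy]
  rw [this, Nat.card_univ]

lemma burnside (G : Type*) [Group G] [Fintype G] (X : Type*) [Finite X] [MulAction G X] :
    ∑ g : G, fx G X g = Nat.card (orbitRel.Quotient G X) * Nat.card G := by
  classical
  haveI : Fintype X := Fintype.ofFinite X
  haveI : ∀ g : G, Fintype (fixedBy X g) := fun g => Fintype.ofFinite _
  haveI : Fintype (orbitRel.Quotient G X) := Fintype.ofFinite _
  have h := MulAction.sum_card_fixedBy_eq_card_orbits_mul_card_group G X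
  simp only [fx, Nat.card_eq_fintype_card]
  exact h

end Prelim

section Prelim2
variable {G : Type*} [Group G] {X : Type*} [MulAction G X]

lemma fixUnique {g : G} {y : X} (h : ∀ z : X, z ≠ y → g • z = z) : g • y = y := by
  by_contra hy
  have h1 : g • (g • y) = g • y := h (g • y) hy
  have : g • y = y := by
    have := smul_left_cancel g h1
    exact this
  exact hy this

lemma fx_ne_pred [Finite X] (g : G) (h : fx G X g + 1 = Nat.card X) : False := by
  classical
  have hfin : (fixedBy X g)ᶜ.Finite := Set.toFinite _
  have hcard : (fixedBy X g)ᶜ.ncard = 1 := by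
    have h1 : (fixedBy X g).ncard + (fixedBy X g)ᶜ.ncard = Nat.card X := by
      rw [Set.ncard_add_ncard_compl]
    have h2 : (fixedBy X g).ncard = fx G X g := by
      rw [fx, Nat.card_coe_set_eq]
    omega
  obtain ⟨y, hy⟩ := Set.ncard_eq_one.mp hcard
  have hyn : ¬ (g • y = y) := by
    have : y ∈ (fixedBy X g)ᶜ := hy ▸ rfl
    exact this
  apply hyn
  apply fixUnique
  intro z hz
  by_contra hzn
  have : z ∈ (fixedBy X g)ᶜ := hzn
  rw [hy] at this
  exact hz this

lemma fx_le [Finite X] (g : G) : fx G X g ≤ Nat.card X := by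
  rw [fx, Nat.card_coe_set_eq, ← Set.ncard_univ]
  exact Set.ncard_le_ncard (Set.subset_univ _) (Set.toFinite _)

end Prelim2

section Prelim3
variable {G : Type*} [Group G] {X : Type*} [MulAction G X]

lemma quot_card_one [Finite X] [Nonempty X] (h : IsPretransitive G X) :
    Nat.card (orbitRel.Quotient G X) = 1 := by
  rw [Nat.card_eq_one_iff_unique]
  constructor
  · constructor
    intro a b
    induction a using Quotient.inductionOn' with | h x =>
    induction b using Quotient.inductionOn' with | h y =>
    apply Quotient.sound'
    rw [MulAction.orbitRel_apply]
    obtain ⟨g, hg⟩ := h.exists_smul_eq y x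
    exact ⟨g, hg⟩
  · exact ⟨Quotient.mk'' (Classical.arbitrary X)⟩

lemma pretransitive_of_quot_card_one [Finite X] (h : Nat.card (orbitRel.Quotient G X) = 1) :
    IsPretransitive G X := by
  constructor
  intro x y
  have hs := (Nat.card_eq_one_iff_unique.mp h).1
  have : (Quotient.mk'' x : orbitRel.Quotient G X) = Quotient.mk'' y := Subsingleton.elim _ _
  have := Quotient.exact' this
  rw [MulAction.orbitRel_apply] at this
  obtain ⟨g, hg⟩ := this
  exact ⟨g⁻¹, by rw [← hg, inv_smul_smul]⟩

lemma jordan [Fintype G] [Finite X] (h : IsPretransitive G X) (h2 : 2 ≤ Nat.card X)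
    (hf : ∀ g : G, 1 ≤ fx G X g) : False := by
  classical
  haveI : Nonempty X := by
    have hpos : 0 < Nat.card X := lt_of_lt_of_le Nat.zero_lt_two h2
    exact (Nat.card_pos_iff.mp hpos).1
  have hb := burnside G X
  rw [quot_card_one h, one_mul] at hb
  have hsplit : ∑ g : G, fx G X g = fx G X 1 + ∑ g ∈ Finset.univ.erase (1 : G), fx G X g := by
    rw [← Finset.sum_erase_add _ _ (Finset.mem_univ (1 : G))]
    ring
  have hge : ∑ g ∈ Finset.univ.erase (1 : G), fx G X g ≥ (Finset.univ.erase (1 : G)).card := by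
    apply Finset.card_nsmul_le_sum (Finset.univ.erase (1:G)) _ 1 (fun g _ => hf g) |>.trans_eq'
    simp
  have hcard : (Finset.univ.erase (1 : G)).card = Fintype.card G - 1 := by
    simp [Finset.card_erase_of_mem]
  rw [fx_one] at hsplit
  have hG : Nat.card G = Fintype.card G := Nat.card_eq_fintype_card
  have hGpos : 1 ≤ Fintype.card G := Fintype.card_pos
  omega

end Prelim3

section Prelim4
variable {G : Type*} [Group G] {X : Type*} [MulAction G X]

open MulAction

/-- fixed points decompose over orbits -/
lemma fx_sigma [Finite X] [Fintype (orbitRel.Quotient G X)] (g : G) :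
    fx G X g = ∑ ω : orbitRel.Quotient G X, fx G ω.orbit g := by
  classical
  haveI : Fintype X := Fintype.ofFinite X
  haveI : ∀ ω : orbitRel.Quotient G X, Fintype (fixedBy (ω.orbit) g) :=
    fun ω => Fintype.ofFinite _
  haveI : Fintype (fixedBy X g) := Fintype.ofFinite _
  have fib : ∀ ω : orbitRel.Quotient G X,
      {x : fixedBy X g // (Quotient.mk'' x.1 : orbitRel.Quotient G X) = ω}
        ≃ fixedBy (ω.orbit) g := by
    intro ω
    refine ⟨fun x => ⟨⟨x.1.1, orbitRel.Quotient.mem_orbit.mpr x.2⟩, Subtype.ext x.1.2⟩,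
      fun y => ⟨⟨y.1.1, congrArg Subtype.val y.2⟩, orbitRel.Quotient.mem_orbit.mp y.1.2⟩,
      fun x => ?_, fun y => ?_⟩
    · apply Subtype.ext; apply Subtype.ext; rfl
    · apply Subtype.ext; apply Subtype.ext; rfl
  have e : fixedBy X g ≃ Σ ω : orbitRel.Quotient G X, fixedBy (ω.orbit) g :=
    (Equiv.sigmaFiberEquiv (fun x : fixedBy X g =>
      (Quotient.mk'' x.1 : orbitRel.Quotient G X))).symm.trans
      (Equiv.sigmaCongrRight fib)
  have hc := Nat.card_congr e
  simp only [fx]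
  rw [hc, Nat.card_eq_fintype_card, Fintype.card_sigma]
  refine Finset.sum_congr rfl (fun ω _ => ?_)
  rw [Nat.card_eq_fintype_card]

end Prelim4

section Prelim5
variable {G : Type*} [Group G] {X : Type*} [MulAction G X]
open MulAction

lemma fx_subgroup (H : Subgroup G) (h : H) : fx H X h = fx G X (h : G) := rfl

lemma card_orbit_sum [Finite X] [Fintype (orbitRel.Quotient G X)] :
    Nat.card X = ∑ ω : orbitRel.Quotient G X, Nat.card ω.orbit := by
  classical
  haveI : Fintype X := Fintype.ofFinite X
  haveI : ∀ ω : orbitRel.Quotient G X, Fintype ω.orbit := fun ω => Fintype.ofFinite _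
  rw [Nat.card_eq_fintype_card, Fintype.card_congr (selfEquivSigmaOrbits' G X),
    Fintype.card_sigma]
  refine Finset.sum_congr rfl (fun ω _ => ?_)
  rw [Nat.card_eq_fintype_card]

lemma two_le_card_orbit {b : X} [Finite X] {g : G} (hg : g • b ≠ b) :
    2 ≤ Nat.card (orbit G b) := by
  have h1 : (g • b) ∈ orbit G b := mem_orbit b g
  have h2 : b ∈ orbit G b := mem_orbit_self b
  have : ({g • b, b} : Set X) ⊆ orbit G b := by
    intro z hz; rcases hz with h | h
    · exact h ▸ h1
    · exact h ▸ h2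
  calc 2 = ({g • b, b} : Set X).ncard := by rw [Set.ncard_pair hg]
    _ ≤ (orbit G b).ncard := Set.ncard_le_ncard this (Set.toFinite _)
    _ = Nat.card (orbit G b) := (Nat.card_coe_set_eq _).symm

lemma all_fixed_of_fx_eq_card [Finite X] {g : G} (h : fx G X g = Nat.card X) (x : X) :
    g • x = x := by
  by_contra hx
  have h1 : (fixedBy X g).ncard + (fixedBy X g)ᶜ.ncard = Nat.card X :=
    Set.ncard_add_ncard_compl _
  have h2 : (fixedBy X g).ncard = fx G X g := by rw [fx, Nat.card_coe_set_eq]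
  have h3 : (fixedBy X g)ᶜ.ncard = 0 := by omega
  have h4 : x ∈ (fixedBy X g)ᶜ := hx
  rw [Set.ncard_eq_zero (Set.toFinite _)] at h3
  rw [h3] at h4
  exact h4

lemma fx_pos_of_fixed {g : G} {x : X} [Finite X] (h : g • x = x) : 1 ≤ fx G X g := by
  have : x ∈ fixedBy X g := h
  have hne : (fixedBy X g).Nonempty := ⟨x, this⟩
  rw [fx, Nat.card_coe_set_eq]
  exact (Set.ncard_pos (Set.toFinite _)).mpr hne

lemma sum_subgroup_split [Fintype G] (H : Subgroup G) (f : G → ℕ) [Fintype H]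
    [DecidablePred (· ∈ H)] :
    ∑ g : G, f g = (∑ h : H, f h) +
      ∑ g ∈ Finset.univ.filter (fun g => g ∉ H), f g := by
  classical
  rw [← Finset.sum_filter_add_sum_filter_not Finset.univ (· ∈ H) f]
  congr 1
  rw [← Finset.sum_subtype (Finset.univ.filter (· ∈ H)) (fun x => by simp) f]

lemma card_compl_subgroup [Fintype G] (H : Subgroup G) [Fintype H] [DecidablePred (· ∈ H)] :
    (Finset.univ.filter (fun g => g ∉ H)).card = Fintype.card G - Fintype.card H := by
  classical
  have : (Finset.univ.filter (fun g => (g : G) ∈ H)).card = Fintype.card H := by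
    rw [← Fintype.card_subtype]
  have h2 := Finset.card_filter_add_card_filter_not (s := (Finset.univ : Finset G))
    (p := (· ∈ H))
  have h4 : (Finset.univ : Finset G).card = Fintype.card G := rfl
  have h5 : Fintype.card H ≤ Fintype.card G :=
    Fintype.card_le_of_injective Subtype.val Subtype.val_injective
  omega

end Prelim5

section Prelim6
variable {G : Type*} [Group G] {X : Type*} [MulAction G X]
open MulAction

lemma natcard_orbit_mul_stab [Fintype G] (b : X) :
    Nat.card (orbit G b) * Nat.card (stabilizer G b) = Nat.card G := by
  classical
  haveI : Finite (orbit G b) := Set.Finite.to_subtype (Set.finite_range _)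
  haveI : Fintype (orbit G b) := Fintype.ofFinite _
  haveI : Fintype (stabilizer G b) := Fintype.ofFinite _
  have := MulAction.card_orbit_mul_card_stabilizer_eq_card_group G b
  simp only [Nat.card_eq_fintype_card]
  exact this

lemma conj_orbit_card {N : Subgroup G} (hN : N.Normal) (g : G) (x : X) :
    Nat.card (orbit N (g • x)) = Nat.card (orbit N x) := by
  refine Nat.card_congr (Equiv.symm ⟨fun y => ⟨g • y.1, ?_⟩, fun y => ⟨g⁻¹ • y.1, ?_⟩, ?_, ?_⟩)
  · obtain ⟨n, hn⟩ := y.2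
    refine ⟨⟨g * n * g⁻¹, hN.conj_mem n.1 n.2 g⟩, ?_⟩
    show (g * n * g⁻¹) • (g • x) = g • y.1
    rw [← hn]
    show (g * n * g⁻¹) • (g • x) = g • (n : G) • x
    simp only [smul_smul]
    congr 1
    group
  · obtain ⟨n, hn⟩ := y.2
    refine ⟨⟨g⁻¹ * n * g, by simpa using hN.conj_mem n.1 n.2 g⁻¹⟩, ?_⟩
    show (g⁻¹ * n * g) • x = g⁻¹ • y.1
    rw [← hn]
    show (g⁻¹ * n * g) • x = g⁻¹ • (n : G) • (g • x)
    simp only [smul_smul]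
    congr 1
    group
  · intro y; apply Subtype.ext; simp
  · intro y; apply Subtype.ext; simp

lemma norbit_card_const {N : Subgroup G} (hN : N.Normal) (hX : IsPretransitive G X)
    (ω1 ω2 : orbitRel.Quotient N X) : Nat.card ω1.orbit = Nat.card ω2.orbit := by
  rw [orbitRel.Quotient.orbit_eq_orbit_out ω1 Quotient.out_eq',
    orbitRel.Quotient.orbit_eq_orbit_out ω2 Quotient.out_eq']
  obtain ⟨g, hg⟩ := hX.exists_smul_eq ω1.out ω2.out
  rw [← hg, conj_orbit_card hN]

lemma sum_pair_of_card_two {α : Type*} [Fintype α] (h : Nat.card α = 2) (f : α → ℕ) :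
    ∃ a b : α, a ≠ b ∧ (∀ c, c = a ∨ c = b) ∧ ∑ x : α, f x = f a + f b := by
  classical
  obtain ⟨a, b, hab, huniv⟩ := Nat.card_eq_two_iff.mp h
  refine ⟨a, b, hab, fun c => ?_, ?_⟩
  · have : c ∈ ({a, b} : Set α) := huniv ▸ Set.mem_univ c
    rcases this with h | h
    · exact Or.inl h
    · exact Or.inr h
  · have : (Finset.univ : Finset α) = {a, b} := by
      ext c
      simp only [Finset.mem_univ, true_iff, Finset.mem_insert, Finset.mem_singleton]
      have : c ∈ ({a, b} : Set α) := huniv ▸ Set.mem_univ c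
      exact this
    rw [this, Finset.sum_pair hab]

end Prelim6

section Prelim7
variable {G : Type*} [Group G] {X : Type*} [MulAction G X]
open MulAction

lemma fx_two_pieces {Y1 Y2 : Type*} [MulAction G Y1] [MulAction G Y2] [Finite X]
    (f1 : Y1 → X) (f2 : Y2 → X)
    (e1 : ∀ (g : G) y, f1 (g • y) = g • f1 y) (e2 : ∀ (g : G) y, f2 (g • y) = g • f2 y)
    (i1 : Function.Injective f1) (i2 : Function.Injective f2)
    (hdis : ∀ y1 y2, f1 y1 ≠ f2 y2)
    (hcov : ∀ x, (∃ y, f1 y = x) ∨ (∃ y, f2 y = x)) (g : G) :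
    fx G X g = fx G Y1 g + fx G Y2 g := by
  classical
  have hmap : ∀ p : (fixedBy Y1 g) ⊕ (fixedBy Y2 g), X :=
    fun p => Sum.elim (fun u => f1 u.1) (fun u => f2 u.1) p
  let F : (fixedBy Y1 g) ⊕ (fixedBy Y2 g) → fixedBy X g := fun p =>
    match p with
    | Sum.inl u => ⟨f1 u.1, by
        have hu : g • u.1 = u.1 := u.2
        show g • f1 u.1 = f1 u.1
        rw [← e1, hu]⟩
    | Sum.inr u => ⟨f2 u.1, by
        have hu : g • u.1 = u.1 := u.2
        show g • f2 u.1 = f2 u.1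
        rw [← e2, hu]⟩
  have hbij : Function.Bijective F := by
    constructor
    · rintro (u | u) (v | v) huv
      · simp only [F, Subtype.mk.injEq] at huv
        exact congrArg Sum.inl (Subtype.ext (i1 huv))
      · simp only [F, Subtype.mk.injEq] at huv
        exact absurd huv (hdis _ _)
      · simp only [F, Subtype.mk.injEq] at huv
        exact absurd huv.symm (hdis _ _)
      · simp only [F, Subtype.mk.injEq] at huv
        exact congrArg Sum.inr (Subtype.ext (i2 huv))
    · rintro ⟨x, hx⟩
      have hgx : g • x = x := hx
      rcases hcov x with ⟨y, hy⟩ | ⟨y, hy⟩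
      · have hyfix : g • y = y := by
          apply i1
          rw [e1, hy]
          exact hgx
        exact ⟨Sum.inl ⟨y, hyfix⟩, Subtype.ext hy⟩
      · have hyfix : g • y = y := by
          apply i2
          rw [e2, hy]
          exact hgx
        exact ⟨Sum.inr ⟨y, hyfix⟩, Subtype.ext hy⟩
  haveI : Finite Y1 := Finite.of_injective f1 i1
  haveI : Finite Y2 := Finite.of_injective f2 i2
  have := Nat.card_congr (Equiv.ofBijective F hbij)
  rw [Nat.card_sum] at this
  rw [fx, fx, fx, ← this]

lemma mem_orbit_out_iff {x : X} {ω : orbitRel.Quotient G X} :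
    x ∈ orbit G ω.out ↔ (Quotient.mk'' x : orbitRel.Quotient G X) = ω := by
  constructor
  · intro h
    have : (Quotient.mk'' x : orbitRel.Quotient G X) = Quotient.mk'' ω.out :=
      Quotient.sound' (orbitRel_apply.mpr h)
    rw [this, Quotient.out_eq']
  · intro h
    have : (Quotient.mk'' x : orbitRel.Quotient G X) = Quotient.mk'' ω.out := by
      rw [h, Quotient.out_eq']
    exact orbitRel_apply.mp (Quotient.exact' this)

lemma orbit_disjoint {a b : X} (h : a ∉ orbit G b) (x : X) :
    x ∈ orbit G a → x ∈ orbit G b → False := by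
  intro h1 h2
  apply h
  have e1 : orbit G x = orbit G a := orbit_eq_iff.mpr h1
  have e2 : orbit G x = orbit G b := orbit_eq_iff.mpr h2
  rw [← e2, e1]
  exact mem_orbit_self a

/-- fixed-point count on a trivial orbit -/
lemma fx_orbit_fixed [Finite X] {x0 : X} (hx0 : ∀ g : G, g • x0 = x0) (g : G) :
    fx G (orbit G x0) g = 1 := by
  have horb : orbit G x0 = {x0} := by
    ext a
    constructor
    · rintro ⟨g, rfl⟩
      simp only [hx0 g, Set.mem_singleton_iff]
    · intro h
      rw [Set.mem_singleton_iff.mp h]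
      exact mem_orbit_self x0
  have hle : fx G (orbit G x0) g ≤ 1 := by
    have h1 : Nat.card (orbit G x0) = 1 := by
      rw [horb]
      simp
    have := fx_le (G := G) (X := ((orbit G x0 : Set X) : Type _)) g
    omega
  have hge : 1 ≤ fx G (orbit G x0) g := by
    refine fx_pos_of_fixed (x := ⟨x0, mem_orbit_self x0⟩) ?_
    apply Subtype.ext
    show g • x0 = x0
    exact hx0 g
  omega

lemma card_orbit_fixed {x0 : X} (hx0 : ∀ g : G, g • x0 = x0) :
    Nat.card (orbit G x0) = 1 := by
  have horb : orbit G x0 = {x0} := by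
    ext a
    constructor
    · rintro ⟨g, rfl⟩
      simp only [hx0 g, Set.mem_singleton_iff]
    · intro h
      rw [Set.mem_singleton_iff.mp h]
      exact mem_orbit_self x0
  rw [horb]
  simp

lemma fx_zero_or_two [Finite X] (h2 : Nat.card X = 2) (g : G) :
    fx G X g = 0 ∨ fx G X g = 2 := by
  have hle := fx_le (G := G) (X := X) g
  have hne : fx G X g ≠ 1 := by
    intro h
    exact fx_ne_pred (G := G) (X := X) g (by omega)
  omega

end Prelim7

section Case5
open MulAction

lemma case5 {G : Type*} [Group G] [Fintype G] {T U V : Type*}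
    [Finite T] [Finite U] [Finite V] [MulAction G T] [MulAction G U] [MulAction G V]
    [IsPretransitive G T] [IsPretransitive G U] [IsPretransitive G V]
    (hT : Nat.card T = 4) (hU : Nat.card U = 2) (hV : Nat.card V = 3)
    (hfx : ∀ g : G, 1 + fx G T g = fx G U g + fx G V g) : False := by
  classical
  haveI : Nonempty U := Nat.card_pos_iff.mp (by omega) |>.1
  haveI : Nonempty V := Nat.card_pos_iff.mp (by omega) |>.1
  haveI : Nonempty T := Nat.card_pos_iff.mp (by omega) |>.1
  obtain ⟨u0⟩ := (inferInstance : Nonempty U)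
  set N := MulAction.stabilizer G u0 with hNdef
  haveI : Fintype N := Fintype.ofFinite _
  -- index 2
  have h2N : 2 * Nat.card N = Nat.card G := by
    have horb : (orbit G u0 : Set U) = Set.univ := orbit_eq_univ G u0
    have h1 := natcard_orbit_mul_stab (G := G) u0
    rw [horb] at h1
    rw [Nat.card_univ] at h1
    rw [hU] at h1
    exact h1
  have hNpos : 0 < Nat.card N := Nat.card_pos
  -- fx U values on N
  have hUfull : ∀ g : G, g ∈ N → fx G U g = 2 := by
    intro g hg
    rcases fx_zero_or_two (G := G) hU g with h | h
    · exfalso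
      have h1 : 1 ≤ fx G U g := fx_pos_of_fixed (mem_stabilizer_iff.mp hg)
      omega
    · exact h
  have hUzero : ∀ g : G, g ∉ N → fx G U g = 0 := by
    intro g hg
    rcases fx_zero_or_two (G := G) hU g with h | h
    · exact h
    · exfalso
      exact hg (mem_stabilizer_iff.mpr (all_fixed_of_fx_eq_card (by rw [h, hU]) u0))
  -- N is normal
  have hNnormal : N.Normal := by
    constructor
    intro n hn g
    have hall := all_fixed_of_fx_eq_card (X := U)
      (g := n) (by rw [hUfull n hn, hU])
    refine mem_stabilizer_iff.mpr ?_
    calc (g * n * g⁻¹) • u0 = g • n • g⁻¹ • u0 := by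
          rw [mul_smul, mul_smul]
      _ = g • g⁻¹ • u0 := by rw [hall (g⁻¹ • u0)]
      _ = u0 := by rw [smul_inv_smul]
  -- Burnside for G on V
  have hbV : ∑ g : G, fx G V g = Nat.card G := by
    have := burnside G V
    rw [quot_card_one (G := G) (X := V) inferInstance, one_mul] at this
    exact this
  -- split the sum
  have hsplit : ∑ g : G, fx G V g = (∑ h : N, fx G V (h : G)) +
      ∑ g ∈ Finset.univ.filter (fun g : G => g ∉ N), fx G V g :=
    sum_subgroup_split N (fun g => fx G V g)
  -- the subgroup part
  have hS0 : ∑ h : N, fx G V (h : G) =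
      Nat.card (orbitRel.Quotient N V) * Nat.card N := burnside N V
  haveI : Nonempty (orbitRel.Quotient N V) := ⟨Quotient.mk'' (Classical.arbitrary V)⟩
  have hoVpos : 0 < Nat.card (orbitRel.Quotient N V) := Nat.card_pos
  -- the complement part
  have hS1 : (Finset.univ.filter (fun g : G => g ∉ N)).card ≤
      ∑ g ∈ Finset.univ.filter (fun g : G => g ∉ N), fx G V g := by
    have := Finset.card_nsmul_le_sum (Finset.univ.filter (fun g : G => g ∉ N))
      (fun g => fx G V g) 1 (fun g hg => by
        have hg' : g ∉ N := (Finset.mem_filter.mp hg).2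
        have := hfx g
        rw [hUzero g hg'] at this
        show 1 ≤ fx G V g
        omega)
    simpa using this
  have hfcard : (Finset.univ.filter (fun g : G => g ∉ N)).card = Nat.card N := by
    rw [card_compl_subgroup]
    have e1 : Nat.card G = Fintype.card G := Nat.card_eq_fintype_card
    have e2 : Nat.card N = Fintype.card N := Nat.card_eq_fintype_card
    omega
  -- conclude N is transitive on V
  have hoV1 : Nat.card (orbitRel.Quotient N V) = 1 := by
    by_contra hne
    have h2le : 2 ≤ Nat.card (orbitRel.Quotient N V) := by omega
    have : 2 * Nat.card N ≤ ∑ h : N, fx G V (h : G) := by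
      rw [hS0]
      exact Nat.mul_le_mul_right _ h2le
    omega
  have hNV : IsPretransitive N V := pretransitive_of_quot_card_one hoV1
  -- fx T = fx V + 1 on N
  have hTV : ∀ g : G, g ∈ N → fx G T g = fx G V g + 1 := by
    intro g hg
    have h1 := hfx g
    rw [hUfull g hg] at h1
    omega
  -- Burnside for N on T
  haveI : Nonempty (orbitRel.Quotient N T) := ⟨Quotient.mk'' (Classical.arbitrary T)⟩
  haveI : Fintype (orbitRel.Quotient N T) := Fintype.ofFinite _
  have hoT2 : Nat.card (orbitRel.Quotient N T) = 2 := by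
    have hbT : ∑ h : N, fx G T (h : G) =
        Nat.card (orbitRel.Quotient N T) * Nat.card N := burnside N T
    have hsum2 : ∑ h : N, fx G T (h : G) = (∑ h : N, fx G V (h : G)) + Nat.card N := by
      have : ∀ h : N, fx G T (h : G) = fx G V (h : G) + 1 :=
        fun h => hTV h.1 h.2
      rw [Finset.sum_congr rfl (fun h _ => this h), Finset.sum_add_distrib]
      congr 1
      rw [Finset.sum_const, Finset.card_univ, smul_eq_mul, mul_one, Nat.card_eq_fintype_card]
    rw [hsum2, hS0, hoV1, one_mul] at hbT
    have : Nat.card (orbitRel.Quotient N T) * Nat.card N = 2 * Nat.card N := by omega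
    exact Nat.eq_of_mul_eq_mul_right hNpos this
  -- the two N-orbits on T
  obtain ⟨τ1, τ2, hτne, hτcov, -⟩ := sum_pair_of_card_two hoT2 (fun _ => 0)
  have hτeq : Nat.card τ1.orbit = Nat.card τ2.orbit :=
    norbit_card_const hNnormal inferInstance τ1 τ2
  have hτsum : Nat.card T = Nat.card τ1.orbit + Nat.card τ2.orbit := by
    rw [card_orbit_sum (G := N) (X := T)]
    obtain ⟨a, b, hab, hcov2, hsum2⟩ := sum_pair_of_card_two hoT2
      (fun ω => Nat.card ω.orbit)
    rw [hsum2]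
    rcases hcov2 τ1 with h1 | h1 <;> rcases hcov2 τ2 with h2 | h2
    · exact absurd (h1.trans h2.symm) hτne
    · rw [h1, h2]
    · rw [h1, h2, Nat.add_comm]
    · exact absurd (h1.trans h2.symm) hτne
  have hτ1 : Nat.card τ1.orbit = 2 := by omega
  have hτ2 : Nat.card τ2.orbit = 2 := by omega
  -- fx decomposition over the two N-orbits
  have hTpieces : ∀ h : N, fx N T h = fx N τ1.orbit h + fx N τ2.orbit h := by
    intro h
    refine fx_two_pieces (G := N) (X := T)
      (Subtype.val : τ1.orbit → T) (Subtype.val : τ2.orbit → T)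
      (fun g y => rfl) (fun g y => rfl) Subtype.val_injective Subtype.val_injective
      (fun y1 y2 hvv => ?_) (fun x => ?_) h
    · have m1 : (Quotient.mk'' (y1 : T) : orbitRel.Quotient N T) = τ1 :=
        orbitRel.Quotient.mem_orbit.mp y1.2
      have m2 : (Quotient.mk'' (y2 : T) : orbitRel.Quotient N T) = τ2 :=
        orbitRel.Quotient.mem_orbit.mp y2.2
      rw [hvv] at m1
      exact hτne (m1.symm.trans m2 ▸ rfl)
    · rcases hτcov (Quotient.mk'' x) with h1 | h1
      · exact Or.inl ⟨⟨x, orbitRel.Quotient.mem_orbit.mpr h1⟩, rfl⟩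
      · exact Or.inr ⟨⟨x, orbitRel.Quotient.mem_orbit.mpr h1⟩, rfl⟩
  -- every element of N has a fixed point on V
  have hfinal : ∀ h : N, 1 ≤ fx N V h := by
    intro h
    have e1 := fx_zero_or_two (G := N) hτ1 h
    have e2 := fx_zero_or_two (G := N) hτ2 h
    have e3 := hTpieces h
    have e4 : fx N T h = fx N V h + 1 := hTV h.1 h.2
    have e5 : fx N V h ≤ 3 := hV ▸ fx_le (G := N) (X := V) h
    omega
  exact jordan hNV (by omega) hfinal

end Case5

section FP
open MulAction

variable {G : Type*} [Group G] {X : Type*} [MulAction G X]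

lemma FP {G : Type*} [Group G] [Fintype G] {A B : Type*} [Finite A] [Finite B]
    [MulAction G A] [MulAction G B]
    (h5 : Nat.card A ≤ 5) (hc : ∀ g : G, fx G A g = fx G B g)
    (x0 : A) (hx0 : ∀ g : G, g • x0 = x0)
    (hB : ∀ b : B, ∃ g : G, g • b ≠ b) : False := by
  classical
  haveI : Fintype (orbitRel.Quotient G A) := Fintype.ofFinite _
  haveI : Fintype (orbitRel.Quotient G B) := Fintype.ofFinite _
  have hcard : Nat.card A = Nat.card B := by
    rw [← fx_one G A, ← fx_one G B, hc]
  have hsum : ∑ g : G, fx G A g = ∑ g : G, fx G B g :=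
    Finset.sum_congr rfl (fun g _ => hc g)
  have hGpos : 0 < Nat.card G := Nat.card_pos
  have hr : Nat.card (orbitRel.Quotient G A) = Nat.card (orbitRel.Quotient G B) := by
    have h1 := burnside G A
    have h2 := burnside G B
    rw [h1, h2] at hsum
    exact Nat.eq_of_mul_eq_mul_right hGpos hsum
  -- all orbits in B have size ≥ 2
  have horbB : ∀ b : B, 2 ≤ Nat.card (orbit G b) := by
    intro b
    obtain ⟨g, hg⟩ := hB b
    exact two_le_card_orbit hg
  have hble : 2 * Nat.card (orbitRel.Quotient G B) ≤ Nat.card B := by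
    rw [card_orbit_sum (G := G) (X := B), Nat.card_eq_fintype_card]
    calc 2 * Fintype.card (orbitRel.Quotient G B)
        = ∑ _ω : orbitRel.Quotient G B, 2 := by
          rw [Finset.sum_const, Finset.card_univ, smul_eq_mul, mul_comm]
      _ ≤ ∑ ω : orbitRel.Quotient G B, Nat.card ω.orbit := by
          refine Finset.sum_le_sum (fun ω _ => ?_)
          have : (ω.orbit : Set B) = orbit G ω.out :=
            orbitRel.Quotient.orbit_eq_orbit_out ω Quotient.out_eq'
          rw [this]
          exact horbB ω.out
  haveI : Nonempty A := ⟨x0⟩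
  haveI : Nonempty B := Nat.card_pos_iff.mp (hcard ▸ Nat.card_pos (α := A)) |>.1
  haveI : Nonempty (orbitRel.Quotient G B) := ⟨Quotient.mk'' (Classical.arbitrary B)⟩
  have hΩBpos : 0 < Nat.card (orbitRel.Quotient G B) :=
    Nat.card_pos (α := orbitRel.Quotient G B)
  -- rule out one orbit
  have hA2 : Nat.card (orbitRel.Quotient G A) = 2 := by
    rcases (show Nat.card (orbitRel.Quotient G A) = 1 ∨
        Nat.card (orbitRel.Quotient G A) = 2 by omega) with h1 | h2
    · exfalso
      have hpt : IsPretransitive G A := pretransitive_of_quot_card_one h1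
      have hA1 : Nat.card A = 1 := by
        rw [Nat.card_eq_one_iff_unique]
        refine ⟨⟨fun a b => ?_⟩, ⟨x0⟩⟩
        obtain ⟨g, hg⟩ := hpt.exists_smul_eq x0 a
        obtain ⟨g', hg'⟩ := hpt.exists_smul_eq x0 b
        rw [← hg, ← hg', hx0 g, hx0 g']
      omega
    · exact h2
  -- A decomposition
  obtain ⟨a1, ha1, hcovA⟩ : ∃ a1 : A, (x0 ∉ orbit G a1) ∧
      (∀ a : A, a ∈ orbit G x0 ∨ a ∈ orbit G a1) := by
    obtain ⟨ω1, ω2, hne, hcov, -⟩ := sum_pair_of_card_two hA2 (fun _ => 0)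
    have hx0mem : (Quotient.mk'' x0 : orbitRel.Quotient G A) = ω1 ∨
        (Quotient.mk'' x0 : orbitRel.Quotient G A) = ω2 := hcov _
    have key : ∀ (ωF ωT : orbitRel.Quotient G A), ωF ≠ ωT →
        (∀ c, c = ωF ∨ c = ωT) → (Quotient.mk'' x0 : orbitRel.Quotient G A) = ωF →
        ∃ a1 : A, (x0 ∉ orbit G a1) ∧ (∀ a : A, a ∈ orbit G x0 ∨ a ∈ orbit G a1) := by
      intro ωF ωT hne hcov hfix
      refine ⟨ωT.out, fun hmem => ?_, fun a => ?_⟩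
      · exact hne (hfix ▸ mem_orbit_out_iff.mp hmem)
      · rcases hcov (Quotient.mk'' a) with h | h
        · left
          have : (Quotient.mk'' a : orbitRel.Quotient G A) = Quotient.mk'' x0 := by
            rw [h, hfix]
          exact orbitRel_apply.mp (Quotient.exact' this)
        · right
          exact mem_orbit_out_iff.mpr h
    rcases hx0mem with h | h
    · exact key ω1 ω2 hne (fun c => hcov c) h
    · exact key ω2 ω1 (Ne.symm hne) (fun c => (hcov c).symm.imp id id) h
  -- B decomposition
  obtain ⟨b1, b2, hb12, hcovB⟩ : ∃ b1 b2 : B, (b1 ∉ orbit G b2) ∧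
      (∀ b : B, b ∈ orbit G b1 ∨ b ∈ orbit G b2) := by
    have hB2 : Nat.card (orbitRel.Quotient G B) = 2 := hr ▸ hA2
    obtain ⟨ω1, ω2, hne, hcov, -⟩ := sum_pair_of_card_two hB2 (fun _ => 0)
    refine ⟨ω1.out, ω2.out, fun hmem => ?_, fun b => ?_⟩
    · have := mem_orbit_out_iff.mp hmem
      rw [Quotient.out_eq'] at this
      exact hne this
    · rcases hcov (Quotient.mk'' b) with h | h
      · exact Or.inl (mem_orbit_out_iff.mpr h)
      · exact Or.inr (mem_orbit_out_iff.mpr h)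
  -- fx additivity on A
  have hfxA : ∀ g : G, fx G A g = 1 + fx G (orbit G a1) g := by
    intro g
    have := fx_two_pieces (G := G) (X := A)
      (Subtype.val : (orbit G x0) → A) (Subtype.val : (orbit G a1) → A)
      (fun g y => rfl) (fun g y => rfl) Subtype.val_injective Subtype.val_injective
      (fun y1 y2 hvv => orbit_disjoint ha1 y1.1 y1.2 (hvv ▸ y2.2))
      (fun a => (hcovA a).imp (fun h => ⟨⟨a, h⟩, rfl⟩) (fun h => ⟨⟨a, h⟩, rfl⟩)) g
    rw [this, fx_orbit_fixed hx0 g]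
  -- fx additivity on B
  have hfxB : ∀ g : G, fx G B g = fx G (orbit G b1) g + fx G (orbit G b2) g := by
    intro g
    exact fx_two_pieces (G := G) (X := B)
      (Subtype.val : (orbit G b1) → B) (Subtype.val : (orbit G b2) → B)
      (fun g y => rfl) (fun g y => rfl) Subtype.val_injective Subtype.val_injective
      (fun y1 y2 hvv => orbit_disjoint hb12 y1.1 y1.2 (hvv ▸ y2.2))
      (fun b => (hcovB b).imp (fun h => ⟨⟨b, h⟩, rfl⟩) (fun h => ⟨⟨b, h⟩, rfl⟩)) g
  -- cardinalities
  have hcardA : Nat.card A = 1 + Nat.card (orbit G a1) := by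
    have := hfxA 1
    rw [fx_one, fx_one] at this
    exact this
  have hcardB : Nat.card B = Nat.card (orbit G b1) + Nat.card (orbit G b2) := by
    have := hfxB 1
    rw [fx_one, fx_one, fx_one] at this
    exact this
  have hob1 : 2 ≤ Nat.card (orbit G b1) := horbB b1
  have hob2 : 2 ≤ Nat.card (orbit G b2) := horbB b2
  have hn45 : Nat.card A = 4 ∨ Nat.card A = 5 := by omega
  have hrel : ∀ g : G, 1 + fx G (orbit G a1) g =
      fx G (orbit G b1) g + fx G (orbit G b2) g := by
    intro g
    rw [← hfxA, hc, hfxB]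
  rcases hn45 with h4 | h5'
  · -- n = 4 : contradiction via parity and Jordan
    have hT3 : Nat.card (orbit G a1) = 3 := by omega
    have hU2 : Nat.card (orbit G b1) = 2 := by omega
    have hV2 : Nat.card (orbit G b2) = 2 := by omega
    refine jordan (G := G) (X := (orbit G a1)) inferInstance (by omega) (fun g => ?_)
    have d1 := fx_zero_or_two (G := G) hU2 g
    have d2 := fx_zero_or_two (G := G) hV2 g
    have d3 := hrel g
    have d4 : fx G (orbit G a1) g ≤ 3 := hT3 ▸ fx_le (G := G) g
    have d5 : fx G (orbit G a1) g ≠ 2 := by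
      intro h
      exact fx_ne_pred (G := G) (X := (orbit G a1)) g (by omega)
    omega
  · -- n = 5 : the hard case
    have hT4 : Nat.card (orbit G a1) = 4 := by omega
    have hUV : Nat.card (orbit G b1) = 2 ∧ Nat.card (orbit G b2) = 3 ∨
        Nat.card (orbit G b1) = 3 ∧ Nat.card (orbit G b2) = 2 := by omega
    rcases hUV with ⟨hU2, hV3⟩ | ⟨hU3, hV2⟩
    · exact case5 hT4 hU2 hV3 hrel
    · exact case5 hT4 hV2 hU3 (fun g => (hrel g).trans (Nat.add_comm _ _))

end FP

section Matched
open MulAction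

lemma matched {G : Type*} [Group G] [Fintype G] {A B : Type*} [Finite A] [Finite B]
    [MulAction G A] [MulAction G B]
    (h5 : Nat.card A ≤ 5) (hc : ∀ g : G, fx G A g = fx G B g) (x0 : A)
    (hmin : ∀ b : B, Nat.card (orbit G x0) ≤ Nat.card (orbit G b)) :
    ∃ y : B, stabilizer G y = stabilizer G x0 := by
  classical
  by_cases hy : ∃ y : B, ∀ h : (stabilizer G x0), h • y = y
  · obtain ⟨y, hy⟩ := hy
    have hle : stabilizer G x0 ≤ stabilizer G y := by
      intro h hh
      exact hy ⟨h, hh⟩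
    have h1 := natcard_orbit_mul_stab (G := G) x0
    have h2 := natcard_orbit_mul_stab (G := G) y
    have hsle : Nat.card (stabilizer G x0) ≤ Nat.card (stabilizer G y) :=
      Subgroup.card_le_of_le hle
    haveI : Nonempty (orbit G y) := ⟨⟨y, mem_orbit_self y⟩⟩
    haveI : Nonempty (orbit G x0) := ⟨⟨x0, mem_orbit_self x0⟩⟩
    have hoy : 0 < Nat.card (orbit G y) := Nat.card_pos
    have hox : 0 < Nat.card (orbit G x0) := Nat.card_pos
    have hsy : 0 < Nat.card (stabilizer G y) := Nat.card_pos
    have hoyx : Nat.card (orbit G y) ≤ Nat.card (orbit G x0) := by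
      have : Nat.card (orbit G y) * Nat.card (stabilizer G y) ≤
          Nat.card (orbit G x0) * Nat.card (stabilizer G y) := by
        rw [h2, ← h1]
        exact Nat.mul_le_mul_left _ hsle
      exact Nat.le_of_mul_le_mul_right this hsy
    have hoeq : Nat.card (orbit G y) = Nat.card (orbit G x0) :=
      Nat.le_antisymm hoyx (hmin y)
    have hseq : Nat.card (stabilizer G y) ≤ Nat.card (stabilizer G x0) := by
      have : Nat.card (orbit G x0) * Nat.card (stabilizer G y) =
          Nat.card (orbit G x0) * Nat.card (stabilizer G x0) := by
        rw [← hoeq, h2, hoeq]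
        exact h1.symm
      exact Nat.le_of_eq (Nat.eq_of_mul_eq_mul_left hox this)
    exact ⟨y, (Subgroup.eq_of_le_of_card_ge hle hseq).symm⟩
  · push_neg at hy
    haveI : Fintype (stabilizer G x0) := Fintype.ofFinite _
    exact absurd (FP (G := (stabilizer G x0)) h5 (fun h => hc h.1) x0
      (fun h => mem_stabilizer_iff.mp h.2) (fun y => hy y)) (fun h => h)

end Matched

section Glue
open MulAction
variable {G : Type*} [Group G]

lemma fx_congr {X Y : Type*} [MulAction G X] [MulAction G Y] (φ : X ≃ Y)
    (hφ : ∀ (g : G) x, φ (g • x) = g • φ x) (g : G) : fx G X g = fx G Y g := by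
  refine Nat.card_congr (Equiv.subtypeEquiv φ (fun x => ?_))
  show g • x = x ↔ g • φ x = φ x
  rw [← hφ]
  exact (Equiv.apply_eq_iff_eq φ).symm

lemma orbit_equiv {A B : Type*} [MulAction G A] [MulAction G B] (x0 : A) (y0 : B)
    (hst : stabilizer G x0 = stabilizer G y0) :
    ∃ φ : (orbit G x0) ≃ (orbit G y0), ∀ (g : G) u, φ (g • u) = g • φ u := by
  classical
  have key : ∀ g g' : G, g • x0 = g' • x0 ↔ g • y0 = g' • y0 := by
    intro g g'
    constructor
    · intro h
      have : g'⁻¹ * g ∈ stabilizer G x0 := by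
        rw [mem_stabilizer_iff, mul_smul, h, inv_smul_smul]
      rw [hst, mem_stabilizer_iff, mul_smul] at this
      calc g • y0 = g' • (g'⁻¹ • g • y0) := by rw [smul_inv_smul]
        _ = g' • y0 := by rw [this]
    · intro h
      have : g'⁻¹ * g ∈ stabilizer G y0 := by
        rw [mem_stabilizer_iff, mul_smul, h, inv_smul_smul]
      rw [← hst, mem_stabilizer_iff, mul_smul] at this
      calc g • x0 = g' • (g'⁻¹ • g • x0) := by rw [smul_inv_smul]
        _ = g' • x0 := by rw [this]
  have hch : ∀ u : (orbit G x0), ∃ g : G, g • x0 = u.1 := fun u => u.2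
  let gu : (orbit G x0) → G := fun u => Classical.choose (hch u)
  have hgu : ∀ u, (gu u) • x0 = u.1 := fun u => Classical.choose_spec (hch u)
  let F : (orbit G x0) → (orbit G y0) := fun u => ⟨(gu u) • y0, mem_orbit y0 (gu u)⟩
  have hFbij : Function.Bijective F := by
    constructor
    · intro u v huv
      have : (gu u) • y0 = (gu v) • y0 := congrArg Subtype.val huv
      apply Subtype.ext
      rw [← hgu u, ← hgu v]
      exact (key _ _).mpr this
    · rintro ⟨b, g, (rfl : g • y0 = b)⟩
      refine ⟨⟨g • x0, mem_orbit x0 g⟩, ?_⟩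
      apply Subtype.ext
      show (gu _) • y0 = g • y0
      exact (key _ _).mp (hgu ⟨g • x0, mem_orbit x0 g⟩)
  refine ⟨Equiv.ofBijective F hFbij, fun g u => ?_⟩
  apply Subtype.ext
  show (gu (g • u)) • y0 = g • ((gu u) • y0)
  rw [← mul_smul]
  refine (key _ _).mp ?_
  rw [hgu (g • u), mul_smul, hgu u]
  rfl

end Glue

section Main
open MulAction

def orbitCompl (G : Type*) [Group G] (X : Type*) [MulAction G X] (x : X) :
    SubMulAction G X where
  carrier := (orbit G x)ᶜ
  smul_mem' := by
    intro c a ha hmem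
    apply ha
    have : (c⁻¹ • (c • a)) ∈ orbit G x := mapsTo_smul_orbit c⁻¹ x hmem
    rwa [inv_smul_smul] at this

lemma glue_step {G : Type} [Group G] [Fintype G] {A B : Type} [Finite A] [Finite B]
    [MulAction G A] [MulAction G B] (hc : ∀ g : G, fx G A g = fx G B g)
    (h5 : Nat.card A ≤ 5) (x0 : A) (y0 : B)
    (hst : stabilizer G x0 = stabilizer G y0)
    (IH : ∀ m, m < Nat.card A → ∀ (A' B' : Type) [Finite A'] [Finite B']
      [MulAction G A'] [MulAction G B'],
      Nat.card A' = m → Nat.card A' ≤ 5 → (∀ g : G, fx G A' g = fx G B' g) →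
      ∃ e : A' ≃ B', ∀ (g : G) (a : A'), e (g • a) = g • e a) :
    ∃ e : A ≃ B, ∀ (g : G) (a : A), e (g • a) = g • e a := by
  classical
  obtain ⟨φ, hφ⟩ := orbit_equiv x0 y0 hst
  set pA := orbitCompl G A x0 with hpA
  set pB := orbitCompl G B y0 with hpB
  have hmemA : ∀ a : A, a ∈ pA ↔ a ∉ orbit G x0 := fun a => Iff.rfl
  have hmemB : ∀ b : B, b ∈ pB ↔ b ∉ orbit G y0 := fun b => Iff.rfl
  -- fx additivity on A
  have hAadd : ∀ g : G, fx G A g = fx G (orbit G x0) g + fx G pA g := by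
    intro g
    refine fx_two_pieces (G := G) (X := A)
      (Subtype.val : (orbit G x0) → A) (Subtype.val : pA → A)
      (fun g y => rfl) (fun g y => rfl) Subtype.val_injective Subtype.val_injective
      (fun y1 y2 hvv => ?_) (fun a => ?_) g
    · exact ((hmemA y2.1).mp y2.2) (hvv ▸ y1.2)
    · by_cases h : a ∈ orbit G x0
      · exact Or.inl ⟨⟨a, h⟩, rfl⟩
      · exact Or.inr ⟨⟨a, h⟩, rfl⟩
  have hBadd : ∀ g : G, fx G B g = fx G (orbit G y0) g + fx G pB g := by
    intro g
    refine fx_two_pieces (G := G) (X := B)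
      (Subtype.val : (orbit G y0) → B) (Subtype.val : pB → B)
      (fun g y => rfl) (fun g y => rfl) Subtype.val_injective Subtype.val_injective
      (fun y1 y2 hvv => ?_) (fun b => ?_) g
    · exact ((hmemB y2.1).mp y2.2) (hvv ▸ y1.2)
    · by_cases h : b ∈ orbit G y0
      · exact Or.inl ⟨⟨b, h⟩, rfl⟩
      · exact Or.inr ⟨⟨b, h⟩, rfl⟩
  have horbfx : ∀ g : G, fx G (orbit G x0) g = fx G (orbit G y0) g :=
    fx_congr φ hφ
  have hcompl : ∀ g : G, fx G pA g = fx G pB g := by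
    intro g
    have h1 := hAadd g
    have h2 := hBadd g
    have h3 := hc g
    have h4 := horbfx g
    omega
  -- cardinalities
  have hcards : Nat.card A = Nat.card (orbit G x0) + Nat.card pA := by
    have := hAadd 1
    rw [fx_one, fx_one, fx_one] at this
    exact this
  haveI : Nonempty (orbit G x0) := ⟨⟨x0, mem_orbit_self x0⟩⟩
  have horbpos : 0 < Nat.card (orbit G x0) := Nat.card_pos
  have hlt : Nat.card pA < Nat.card A := by omega
  obtain ⟨e', he'⟩ := IH (Nat.card pA) hlt pA pB rfl (by omega) hcompl
  -- assemble
  let F : A → B := fun a =>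
    if h : a ∈ orbit G x0 then (φ ⟨a, h⟩ : B) else (e' ⟨a, h⟩ : B)
  have hF1 : ∀ (a : A) (h : a ∈ orbit G x0), F a = (φ ⟨a, h⟩ : B) := by
    intro a h
    simp only [F, dif_pos h]
  have hF2 : ∀ (a : A) (h : ¬ a ∈ orbit G x0), F a = (e' ⟨a, h⟩ : B) := by
    intro a h
    simp only [F, dif_neg h]
  have hbij : Function.Bijective F := by
    constructor
    · intro a a' haa
      by_cases h : a ∈ orbit G x0 <;> by_cases h' : a' ∈ orbit G x0
      · rw [hF1 a h, hF1 a' h'] at haa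
        have := φ.injective (Subtype.ext haa)
        exact congrArg Subtype.val this
      · rw [hF1 a h, hF2 a' h'] at haa
        exact absurd (haa ▸ (φ ⟨a, h⟩).2) ((hmemB _).mp (e' ⟨a', h'⟩).2)
      · rw [hF2 a h, hF1 a' h'] at haa
        exact absurd (haa ▸ (e' ⟨a, h⟩).2) (fun hmem => ((hmemB _).mp hmem) (φ ⟨a', h'⟩).2)
      · rw [hF2 a h, hF2 a' h'] at haa
        have := e'.injective (Subtype.ext haa)
        exact congrArg Subtype.val this
    · intro b
      by_cases hb : b ∈ orbit G y0
      · refine ⟨(φ.symm ⟨b, hb⟩).1, ?_⟩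
        rw [hF1 _ (φ.symm ⟨b, hb⟩).2]
        have : (⟨(φ.symm ⟨b, hb⟩).1, (φ.symm ⟨b, hb⟩).2⟩ : (orbit G x0)) =
            φ.symm ⟨b, hb⟩ := rfl
        rw [this, Equiv.apply_symm_apply]
      · refine ⟨(e'.symm ⟨b, hb⟩).1, ?_⟩
        have hmem : (e'.symm ⟨b, hb⟩).1 ∉ orbit G x0 :=
          (hmemA _).mp (e'.symm ⟨b, hb⟩).2
        rw [hF2 _ hmem]
        have : (⟨(e'.symm ⟨b, hb⟩).1, hmem⟩ : pA) = e'.symm ⟨b, hb⟩ :=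
          Subtype.ext rfl
        rw [this, Equiv.apply_symm_apply]
  refine ⟨Equiv.ofBijective F hbij, fun g a => ?_⟩
  show F (g • a) = g • F a
  by_cases h : a ∈ orbit G x0
  · have hga : g • a ∈ orbit G x0 := mapsTo_smul_orbit g x0 h
    rw [hF1 _ hga, hF1 _ h]
    have : (⟨g • a, hga⟩ : (orbit G x0)) = g • (⟨a, h⟩ : (orbit G x0)) :=
      Subtype.ext rfl
    rw [this, hφ]
    rfl
  · have hga : g • a ∉ orbit G x0 := by
      intro hmem
      apply h
      have : (g⁻¹ • (g • a)) ∈ orbit G x0 := mapsTo_smul_orbit g⁻¹ x0 hmem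
      rwa [inv_smul_smul] at this
    rw [hF2 _ hga, hF2 _ h]
    have : (⟨g • a, hga⟩ : pA) = g • (⟨a, h⟩ : pA) := Subtype.ext rfl
    rw [this, he']
    rfl

lemma main : ∀ (n : ℕ) (G : Type) [Group G] [Fintype G] (A B : Type) [Finite A] [Finite B]
    [MulAction G A] [MulAction G B], Nat.card A = n → Nat.card A ≤ 5 →
    (∀ g : G, fx G A g = fx G B g) →
    ∃ e : A ≃ B, ∀ (g : G) (a : A), e (g • a) = g • e a := by
  intro n
  induction n using Nat.strong_induction_on with
  | _ n IH =>
    intro G _ _ A B _ _ _ _ hn h5 hc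
    classical
    have hcard : Nat.card A = Nat.card B := by
      rw [← fx_one G A, ← fx_one G B, hc]
    by_cases hA0 : Nat.card A = 0
    · haveI : IsEmpty A := (Nat.card_eq_zero.mp hA0).resolve_right
        (fun h => by haveI := h; exact (not_finite A).elim)
      haveI : IsEmpty B := (Nat.card_eq_zero.mp (hcard ▸ hA0)).resolve_right
        (fun h => by haveI := h; exact (not_finite B).elim)
      exact ⟨Equiv.equivOfIsEmpty A B, fun g a => (IsEmpty.false a).elim⟩
    · haveI : Nonempty A := Nat.card_pos_iff.mp (by omega) |>.1
      haveI : Nonempty B := by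
        have hB0 : 0 < Nat.card B := by omega
        exact (Nat.card_pos_iff.mp hB0).1
      haveI : Fintype (A ⊕ B) := Fintype.ofFinite _
      let f : A ⊕ B → ℕ := Sum.elim (fun a => Nat.card (orbit G a))
        (fun b => Nat.card (orbit G b))
      obtain ⟨p, -, hpmin⟩ := Finset.exists_min_image (Finset.univ : Finset (A ⊕ B)) f
        ⟨Sum.inl (Classical.arbitrary A), Finset.mem_univ _⟩
      have hIH : ∀ m, m < Nat.card A → ∀ (A' B' : Type) [Finite A'] [Finite B']
          [MulAction G A'] [MulAction G B'],
          Nat.card A' = m → Nat.card A' ≤ 5 → (∀ g : G, fx G A' g = fx G B' g) →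
          ∃ e : A' ≃ B', ∀ (g : G) (a : A'), e (g • a) = g • e a := by
        intro m hm A' B' _ _ _ _ hm' h5' hc'
        exact IH m (hn ▸ hm) G A' B' hm' h5' hc'
      cases p with
      | inl x0 =>
        have hmin : ∀ b : B, Nat.card (orbit G x0) ≤ Nat.card (orbit G b) :=
          fun b => hpmin (Sum.inr b) (Finset.mem_univ _)
        obtain ⟨y0, hst⟩ := matched h5 hc x0 hmin
        exact glue_step hc h5 x0 y0 hst.symm hIH
      | inr y0 =>
        have hmin : ∀ a : A, Nat.card (orbit G y0) ≤ Nat.card (orbit G a) :=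
          fun a => hpmin (Sum.inl a) (Finset.mem_univ _)
        have hc' : ∀ g : G, fx G B g = fx G A g := fun g => (hc g).symm
        obtain ⟨x0, hst⟩ := matched (hcard ▸ h5) hc' y0 hmin
        exact glue_step hc h5 x0 y0 hst hIH

end Main

/-- Gassmann equivalent G-sets of cardinality at most 5 are isomorphic. -/
theorem stmt_7 (G : Type) [Group G] [Fintype G]
    (A B : Type) [Fintype A] [Fintype B] [MulAction G A] [MulAction G B]
    (hA5 : Nat.card A ≤ 5) (hB5 : Nat.card B ≤ 5)
    (h : ∀ g : G, Nat.card (MulAction.fixedBy A g) = Nat.card (MulAction.fixedBy B g)) :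
    ∃ e : A ≃ B, ∀ (g : G) (a : A), e (g • a) = g • e a := by
  exact main (Nat.card A) G A B rfl hA5 h
end

section
/- Let V = F₂³ and G = GL₃(F₂) acting naturally on V. Let A be the set of 1-dimensional subspaces of V and B the set of 2-dimensional subspaces of V, each with the induced G-action. Then there is no G-equivariant bijection between A and B. -/
open Matrix

abbrev V2 := Fin 3 → ZMod 2

noncomputable def gOf (M N : Matrix (Fin 3) (Fin 3) (ZMod 2))
    (h1 : M * N = 1) (h2 : N * M = 1) : V2 ≃ₗ[ZMod 2] V2 :=
  LinearEquiv.ofLinear (Matrix.toLin' M) (Matrix.toLin' N)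
    (by rw [← Matrix.toLin'_mul, h1, Matrix.toLin'_one])
    (by rw [← Matrix.toLin'_mul, h2, Matrix.toLin'_one])

noncomputable def gg1 : V2 ≃ₗ[ZMod 2] V2 :=
  gOf !![1,0,0; 0,0,1; 0,1,1] !![1,0,0; 0,1,1; 0,1,0] (by decide) (by decide)

noncomputable def gg2 : V2 ≃ₗ[ZMod 2] V2 :=
  gOf !![1,1,0; 0,1,0; 0,0,1] !![1,1,0; 0,1,0; 0,0,1] (by decide) (by decide)

lemma gg1_apply (v : V2) : gg1 v = ![v 0, v 2, v 1 + v 2] := by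
  funext i
  fin_cases i <;>
    simp [gg1, gOf, Matrix.toLin'_apply, Matrix.mulVec, dotProduct, Fin.sum_univ_succ]

lemma gg2_apply (v : V2) : gg2 v = ![v 0 + v 1, v 1, v 2] := by
  funext i
  fin_cases i <;>
    simp [gg2, gOf, Matrix.toLin'_apply, Matrix.mulVec, dotProduct, Fin.sum_univ_succ]

def vv0 : V2 := ![1,0,0]

lemma vv0_ne : vv0 ≠ 0 := by
  intro h
  have := congrFun h 0
  simp [vv0] at this

noncomputable def L0 : Submodule (ZMod 2) V2 := Submodule.span (ZMod 2) {vv0}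

lemma finrank_L0 : Module.finrank (ZMod 2) L0 = 1 :=
  finrank_span_singleton vv0_ne

noncomputable def P : Submodule (ZMod 2) V2 :=
  LinearMap.ker (LinearMap.proj (R := ZMod 2) (φ := fun _ : Fin 3 => ZMod 2) 0)

lemma mem_P {x : V2} : x ∈ P ↔ x 0 = 0 := by
  simp [P, LinearMap.mem_ker]

lemma finrank_P : Module.finrank (ZMod 2) P = 2 := by
  have h := LinearMap.finrank_range_add_finrank_ker
    (LinearMap.proj (R := ZMod 2) (φ := fun _ : Fin 3 => ZMod 2) 0)
  have hsurj : Function.Surjective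
      (LinearMap.proj (R := ZMod 2) (φ := fun _ : Fin 3 => ZMod 2) 0) := by
    intro c; exact ⟨fun _ => c, rfl⟩
  rw [LinearMap.range_eq_top.mpr hsurj, finrank_top, Module.finrank_self,
    Module.finrank_fin_fun] at h
  change _ + Module.finrank (ZMod 2) P = _ at h
  omega

lemma gg1_vv0 : gg1 vv0 = vv0 := by
  rw [gg1_apply]; funext i; fin_cases i <;> simp [vv0]

lemma gg2_vv0 : gg2 vv0 = vv0 := by
  rw [gg2_apply]; funext i; fin_cases i <;> simp [vv0]

lemma map_L0 (g : V2 ≃ₗ[ZMod 2] V2) (h : g vv0 = vv0) :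
    Submodule.map (g : V2 →ₗ[ZMod 2] V2) L0 = L0 := by
  rw [L0, Submodule.map_span, Set.image_singleton]
  exact congrArg _ (congrArg _ h)

lemma eq_P (W : Submodule (ZMod 2) V2) (hW : Module.finrank (ZMod 2) W = 2)
    (hmap : Submodule.map (gg1 : V2 →ₗ[ZMod 2] V2) W = W) : W = P := by
  have hstab : ∀ x ∈ W, gg1 x ∈ W := by
    intro x hx
    rw [← hmap]
    exact Submodule.mem_map_of_mem hx
  have hsup : Module.finrank (ZMod 2) ↥(W ⊔ P) ≤ 3 := by
    have h1 := Submodule.finrank_le (W ⊔ P)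
    rwa [Module.finrank_fin_fun] at h1
  have hdim := Submodule.finrank_sup_add_finrank_inf_eq W P
  rw [hW, finrank_P] at hdim
  have hU1 : 1 ≤ Module.finrank (ZMod 2) ↥(W ⊓ P) := by omega
  have hWle : W ≤ P := by
    by_contra hWP
    have hPW : ¬ P ≤ W := by
      intro h
      exact hWP ((Submodule.eq_of_le_of_finrank_le h (by rw [hW, finrank_P])).symm.le)
    have hUne : W ⊓ P ≠ P := fun h => hPW (h ▸ inf_le_left : P ≤ W)
    have hUlt : W ⊓ P < P := lt_of_le_of_ne inf_le_right hUne
    have hUdim : Module.finrank (ZMod 2) ↥(W ⊓ P) < 2 := by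
      have := Submodule.finrank_lt_finrank_of_lt hUlt
      rwa [finrank_P] at this
    have hUbot : W ⊓ P ≠ ⊥ := by
      intro h
      rw [h] at hU1
      simp at hU1
    obtain ⟨u, hu, hune⟩ := Submodule.exists_mem_ne_zero_of_ne_bot hUbot
    have hspan : Submodule.span (ZMod 2) {u} = W ⊓ P := by
      apply Submodule.eq_of_le_of_finrank_le
        ((Submodule.span_singleton_le_iff_mem u _).mpr hu)
      rw [finrank_span_singleton hune]
      omega
    have hgu : gg1 u ∈ W ⊓ P := by
      refine Submodule.mem_inf.mpr ⟨hstab u hu.1, ?_⟩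
      rw [mem_P, gg1_apply]
      simpa using (mem_P.mp hu.2)
    rw [← hspan, Submodule.mem_span_singleton] at hgu
    obtain ⟨c, hc⟩ := hgu
    have hu0 : u 0 = 0 := mem_P.mp hu.2
    have hc2 : c = 0 ∨ c = 1 := by
      rcases c with ⟨cv, hcv⟩
      interval_cases cv
      · left; rfl
      · right; rfl
    rcases hc2 with rfl | rfl
    · rw [zero_smul] at hc
      exact hune (by simpa using (gg1.map_eq_zero_iff).mp hc.symm)
    · rw [one_smul] at hc
      rw [gg1_apply] at hc
      have h1 := congrFun hc 1
      have h2 := congrFun hc 2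
      simp at h1 h2
      -- h1 : u 1 = u 2, h2 : u 1 = 0
      have hu2 : u 2 = 0 := by rw [← h1]; exact h2
      apply hune
      funext i
      fin_cases i
      · simpa using hu0
      · simpa using h2
      · simpa using hu2
  exact Submodule.eq_of_le_of_finrank_le hWle (by rw [hW, finrank_P])

/-- For V = F₂³, there is no GL(V)-equivariant bijection between the set of
1-dimensional subspaces and the set of 2-dimensional subspaces. -/
theorem stmt_11 :
    ¬ ∃ e : {L : Submodule (ZMod 2) (Fin 3 → ZMod 2) // Module.finrank (ZMod 2) L = 1} ≃
            {W : Submodule (ZMod 2) (Fin 3 → ZMod 2) // Module.finrank (ZMod 2) W = 2},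
        ∀ (g : (Fin 3 → ZMod 2) ≃ₗ[ZMod 2] (Fin 3 → ZMod 2))
          (L L' : {L : Submodule (ZMod 2) (Fin 3 → ZMod 2) // Module.finrank (ZMod 2) L = 1}),
          Submodule.map (g : (Fin 3 → ZMod 2) →ₗ[ZMod 2] (Fin 3 → ZMod 2)) L.1 = L'.1 →
            Submodule.map (g : (Fin 3 → ZMod 2) →ₗ[ZMod 2] (Fin 3 → ZMod 2)) (e L).1 =
              (e L').1 := by
  rintro ⟨e, he⟩
  have h1 := he gg1 ⟨L0, finrank_L0⟩ ⟨L0, finrank_L0⟩ (map_L0 gg1 gg1_vv0)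
  have hWP : (e ⟨L0, finrank_L0⟩).1 = P := eq_P _ (e ⟨L0, finrank_L0⟩).2 h1
  have h2 := he gg2 ⟨L0, finrank_L0⟩ ⟨L0, finrank_L0⟩ (map_L0 gg2 gg2_vv0)
  rw [hWP] at h2
  have he1 : (![0,1,0] : V2) ∈ P := mem_P.mpr (by norm_num)
  have hmem : gg2 ![0,1,0] ∈ P := by
    rw [← h2]
    exact Submodule.mem_map_of_mem he1
  rw [mem_P, gg2_apply] at hmem
  simp at hmem
end
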